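/- Any two cluster decompositions of a given multiset z of points in a metric space admit a common refinement: if z = Σ_i x_i and z = Σ_j y_j are cluster decompositions, then z = Σ_{i,j} (x_i ∩ y_j) is a cluster decomposition. In particular, there exists a finest cluster decomposition of z. -/

import Mathlib

def ClusteringRule (r d : ℕ → ℝ) : Prop :=
  0 < r 1 ∧ d 1 = 0 ∧
  (∀ k, 1 ≤ k → r k < r (k + 1)) ∧
  (∀ k, 1 ≤ k → d k < d (k + 1)) ∧
  (∀ k, 2 ≤ k → d k + r (k - 1) < r k) ∧
  (∀ k, 2 ≤ k → 6 * r (k - 1) < d k)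

namespace ClusterAux

variable {r d : ℕ → ℝ}

lemma r_mono (h : ClusteringRule r d) {k k' : ℕ} (hk : 1 ≤ k) (hkk : k ≤ k') :
    r k ≤ r k' := by
  obtain ⟨n, rfl⟩ := Nat.exists_eq_add_of_le hkk
  clear hkk
  induction n with
  | zero => simp
  | succ n ih =>
    have h1 : 1 ≤ k + n := by omega
    have := h.2.2.1 (k + n) h1
    have : r (k + n) < r (k + n + 1) := this
    calc r k ≤ r (k + n) := ih
      _ ≤ r (k + (n+1)) := by rw [show k + (n+1) = k + n + 1 by ring]; linarith

lemma r_pos (h : ClusteringRule r d) {k : ℕ} (hk : 1 ≤ k) : 0 < r k :=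
  lt_of_lt_of_le h.1 (r_mono h le_rfl hk)

lemma d_lt_r (h : ClusteringRule r d) {k : ℕ} (hk : 2 ≤ k) : d k < r k := by
  have h1 := h.2.2.2.2.1 k hk
  have h2 : 0 < r (k - 1) := r_pos h (by omega)
  linarith

lemma six_r (h : ClusteringRule r d) {k : ℕ} (hk : 2 ≤ k) : 6 * r (k - 1) < d k :=
  h.2.2.2.2.2 k hk

/-- Two confined, separated clusters with a common point: contradiction. -/
lemma no_common_point (h : ClusteringRule r d) {M : Type*} [MetricSpace M]
    {a b : ℕ} (ha : 1 ≤ a) (hb : 1 ≤ b) {u v e : M}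
    (hu : dist e u < r a) (hv : dist e v < r b)
    (hsep : d (a + b) < dist u v) : False := by
  have htri : dist u v ≤ dist u e + dist e v := dist_triangle u e v
  have h1 : dist u e = dist e u := dist_comm u e
  have hs : 2 ≤ a + b := by omega
  have h6 := six_r h hs
  have hra : r a ≤ r (a + b - 1) := r_mono h ha (by omega)
  have hrb : r b ≤ r (a + b - 1) := r_mono h hb (by omega)
  have hrp : 0 < r (a + b - 1) := r_pos h (by omega)
  linarith

/-- Comparison lemma: if a cluster `A i` (from one decomposition) meets a cluster `B j`
(from another) and has at most its cardinality, then `A i ≤ B j`. -/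
lemma compare (h : ClusteringRule r d) {M : Type*} [MetricSpace M] [DecidableEq M]
    (z : Multiset M) {m l : ℕ} (A : Fin m → Multiset M) (cA : Fin m → M)
    (B : Fin l → Multiset M) (cB : Fin l → M)
    (hAsum : (∑ i, A i) = z) (hBsum : (∑ j, B j) = z)
    (hAconf : ∀ i, ∀ p ∈ A i, dist p (cA i) < r (A i).card)
    (hBconf : ∀ j, ∀ p ∈ B j, dist p (cB j) < r (B j).card)
    (hBsep : ∀ i j, i ≠ j → d ((B i).card + (B j).card) < dist (cB i) (cB j))
    (i : Fin m) (j : Fin l) (b0 : M) (hb0A : b0 ∈ A i) (hb0B : b0 ∈ B j)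
    (hcard : (A i).card ≤ (B j).card) : A i ≤ B j := by
  rw [Multiset.le_iff_count]
  intro e
  by_contra hcnt
  push_neg at hcnt
  have heA : e ∈ A i := by
    rw [← Multiset.count_pos]; omega
  -- z's count of e is the sum of the B-counts
  have hzB : z.count e = ∑ j', (B j').count e := by
    rw [← hBsum]; exact Multiset.count_sum'
  have hAz : A i ≤ z := by
    rw [← hAsum]
    exact Finset.single_le_sum (f := A) (fun i' _ => Multiset.zero_le _) (Finset.mem_univ i)
  have hAle : (A i).count e ≤ z.count e := Multiset.le_iff_count.mp hAz e
  -- find another B-cluster containing e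
  have hex : ∃ j' : Fin l, j' ≠ j ∧ e ∈ B j' := by
    by_contra hno
    push_neg at hno
    have : ∑ j', (B j').count e = (B j).count e := by
      apply Finset.sum_eq_single
      · intro j' _ hne
        have := hno j' hne
        rw [← Multiset.count_pos] at this
        omega
      · intro habs; exact absurd (Finset.mem_univ j) habs
    omega
  obtain ⟨j', hj'ne, heB'⟩ := hex
  -- geometry
  set a := (A i).card with ha_def
  set b := (B j).card with hb_def
  set b' := (B j').card with hb'_def
  have ha1 : 1 ≤ a := Multiset.card_pos.mpr (fun h0 => by simp [h0] at hb0A)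
  have hb1 : 1 ≤ b := Multiset.card_pos.mpr (fun h0 => by simp [h0] at hb0B)
  have hb'1 : 1 ≤ b' := Multiset.card_pos.mpr (fun h0 => by simp [h0] at heB')
  have d1 : dist e (cA i) < r a := hAconf i e heA
  have d2 : dist b0 (cA i) < r a := hAconf i b0 hb0A
  have d3 : dist b0 (cB j) < r b := hBconf j b0 hb0B
  have d4 : dist e (cB j') < r b' := hBconf j' e heB'
  have hsep := hBsep j' j hj'ne
  have htri : dist (cB j') (cB j) ≤ dist (cB j') e + dist e (cA i) + dist (cA i) b0
      + dist b0 (cB j) := by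
    calc dist (cB j') (cB j) ≤ dist (cB j') b0 + dist b0 (cB j) := dist_triangle _ _ _
      _ ≤ (dist (cB j') e + dist e (cA i) + dist (cA i) b0) + dist b0 (cB j) := by
          have := dist_triangle4 (cB j') e (cA i) b0
          linarith
  have hc1 : dist (cB j') e = dist e (cB j') := dist_comm _ _
  have hc2 : dist (cA i) b0 = dist b0 (cA i) := dist_comm _ _
  have hs : 2 ≤ b' + b := by omega
  have h6 := six_r h hs
  have hra : r a ≤ r (b' + b - 1) := r_mono h ha1 (by omega)
  have hrb : r b ≤ r (b' + b - 1) := r_mono h hb1 (by omega)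
  have hrb' : r b' ≤ r (b' + b - 1) := r_mono h hb'1 (by omega)
  have hrp : 0 < r (b' + b - 1) := r_pos h (by omega)
  linarith

/-- Mixed separation estimate. -/
lemma mixed_sep (h : ClusteringRule r d) {M : Type*} [MetricSpace M]
    {b a' b' : ℕ} (hb : 1 ≤ b) (ha' : 1 ≤ a') (hab : a' < b')
    {u v w : M} (hsep : d (b + b') < dist u w) (hvw : dist v w < r a' + r b') :
    d (b + a') < dist u v := by
  have htri : dist u w ≤ dist u v + dist v w := dist_triangle u v w
  have hs : 2 ≤ b + b' := by omega
  have h6 := six_r h hs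
  have hd1 : d (b + a') < r (b + a') := d_lt_r h (by omega)
  have hr1 : r (b + a') ≤ r (b + b' - 1) := r_mono h (by omega) (by omega)
  have hra' : r a' ≤ r (b + b' - 1) := r_mono h ha' (by omega)
  have hrb' : r b' ≤ r (b + b' - 1) := r_mono h (by omega) (by omega)
  have hrp : 0 < r (b + b' - 1) := r_pos h (by omega)
  linarith

end ClusterAux
theorem cluster_decompositions_common_refinement {M : Type*} [MetricSpace M] [DecidableEq M]
    (r d : ℕ → ℝ) (hrule : ClusteringRule r d) (z : Multiset M)
    (m : ℕ) (X : Fin m → Multiset M) (cX : Fin m → M)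
    (hXsum : (∑ i, X i) = z) (hXne : ∀ i, X i ≠ 0)
    (hXconf : ∀ i, ∀ p ∈ X i, dist p (cX i) < r (X i).card)
    (hXsep : ∀ i j, i ≠ j → d ((X i).card + (X j).card) < dist (cX i) (cX j))
    (l : ℕ) (Y : Fin l → Multiset M) (cY : Fin l → M)
    (hYsum : (∑ j, Y j) = z) (hYne : ∀ j, Y j ≠ 0)
    (hYconf : ∀ j, ∀ p ∈ Y j, dist p (cY j) < r (Y j).card)
    (hYsep : ∀ i j, i ≠ j → d ((Y i).card + (Y j).card) < dist (cY i) (cY j)) :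
    (∑ i, ∑ j, X i ∩ Y j) = z ∧
    ∃ c : Fin m × Fin l → M,
      (∀ p : Fin m × Fin l, X p.1 ∩ Y p.2 ≠ 0 →
        ∀ x ∈ X p.1 ∩ Y p.2, dist x (c p) < r (X p.1 ∩ Y p.2).card) ∧
      (∀ p q : Fin m × Fin l, p ≠ q → X p.1 ∩ Y p.2 ≠ 0 → X q.1 ∩ Y q.2 ≠ 0 →
        d ((X p.1 ∩ Y p.2).card + (X q.1 ∩ Y q.2).card) < dist (c p) (c q)) := by
  classical
  -- distinct clusters of a single decomposition share no point
  have hcard1 : ∀ {s : Multiset M} {e : M}, e ∈ s → 1 ≤ s.card := by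
    intro s e he
    exact Multiset.card_pos.mpr (fun h0 => by simp [h0] at he)
  have hXdisj : ∀ (i i' : Fin m), i ≠ i' → ∀ e : M, e ∈ X i → e ∈ X i' → False := by
    intro i i' hne e he he'
    exact ClusterAux.no_common_point hrule (hcard1 he) (hcard1 he')
      (hXconf i e he) (hXconf i' e he') (hXsep i i' hne)
  have hYdisj : ∀ (j j' : Fin l), j ≠ j' → ∀ e : M, e ∈ Y j → e ∈ Y j' → False := by
    intro j j' hne e he he'
    exact ClusterAux.no_common_point hrule (hcard1 he) (hcard1 he')
      (hYconf j e he) (hYconf j' e he') (hYsep j j' hne)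
  have hzX : ∀ e : M, z.count e = ∑ i, (X i).count e := fun e => by
    rw [← hXsum]; exact Multiset.count_sum'
  have hzY : ∀ e : M, z.count e = ∑ j, (Y j).count e := fun e => by
    rw [← hYsum]; exact Multiset.count_sum'
  have hYlez : ∀ j, Y j ≤ z := fun j => by
    rw [← hYsum]
    exact Finset.single_le_sum (f := Y) (fun j' _ => Multiset.zero_le _) (Finset.mem_univ j)
  have part1 : (∑ i, ∑ j, X i ∩ Y j) = z := by
    rw [Multiset.ext]
    intro e
    simp only [Multiset.count_sum', Multiset.count_inter]
    have inner : ∀ i, (∑ j, min ((X i).count e) ((Y j).count e)) = (X i).count e := by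
      intro i
      rcases Nat.eq_zero_or_pos ((X i).count e) with h0 | hpos
      · simp [h0]
      · have hXz : (X i).count e = z.count e := by
          have hsum : ∑ i', (X i').count e = (X i).count e := by
            apply Finset.sum_eq_single
            · intro i' _ hne
              by_contra hc
              exact hXdisj i' i hne e (Multiset.count_pos.mp (Nat.pos_of_ne_zero hc))
                (Multiset.count_pos.mp hpos)
            · intro habs; exact absurd (Finset.mem_univ i) habs
          rw [hzX e, hsum]
        calc (∑ j, min ((X i).count e) ((Y j).count e)) = ∑ j, (Y j).count e := by
              apply Finset.sum_congr rfl
              intro j _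
              have hle : (Y j).count e ≤ z.count e := Multiset.le_iff_count.mp (hYlez j) e
              rw [hXz]
              exact min_eq_right hle
          _ = z.count e := (hzY e).symm
          _ = (X i).count e := hXz.symm
    rw [Finset.sum_congr rfl (fun i _ => inner i), ← hzX e]
  -- comparison lemma
  have hcomp : ∀ (i : Fin m) (j : Fin l), X i ∩ Y j ≠ 0 → X i ≤ Y j ∨ Y j ≤ X i := by
    intro i j hne
    obtain ⟨e, he⟩ := Multiset.exists_mem_of_ne_zero hne
    rw [Multiset.mem_inter] at he
    rcases le_total ((X i).card) ((Y j).card) with h | h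
    · exact Or.inl (ClusterAux.compare hrule z X cX Y cY hXsum hYsum hXconf hYconf hYsep
        i j e he.1 he.2 h)
    · exact Or.inr (ClusterAux.compare hrule z Y cY X cX hYsum hXsum hYconf hXconf hXsep
        j i e he.2 he.1 h)
  have hinterY : ∀ (i : Fin m) (j : Fin l), Y j ≤ X i → X i ∩ Y j = Y j := fun i j h =>
    le_antisymm Multiset.inter_le_right (Multiset.le_inter h le_rfl)
  have hinterX : ∀ (i : Fin m) (j : Fin l), X i ≤ Y j → X i ∩ Y j = X i := fun i j h =>
    le_antisymm Multiset.inter_le_left (Multiset.le_inter le_rfl h)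
  have hclass : ∀ (i : Fin m) (j : Fin l), X i ∩ Y j ≠ 0 → ¬ (Y j ≤ X i) →
      X i ≤ Y j ∧ (X i).card < (Y j).card := by
    intro i j hne hnY
    rcases hcomp i j hne with h | h
    · refine ⟨h, ?_⟩
      have hne' : X i ≠ Y j := fun he => hnY (he ▸ le_rfl)
      exact Multiset.card_lt_card (lt_of_le_of_ne h hne')
    · exact absurd h hnY
  refine ⟨part1, ⟨fun p => if Y p.2 ≤ X p.1 then cY p.2 else cX p.1, ?_, ?_⟩⟩
  · -- confinement
    intro p hne x hx
    beta_reduce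
    by_cases hYX : Y p.2 ≤ X p.1
    · rw [if_pos hYX]
      rw [hinterY _ _ hYX] at hx ⊢
      exact hYconf p.2 x hx
    · rw [if_neg hYX]
      obtain ⟨hXY, _⟩ := hclass p.1 p.2 hne hYX
      rw [hinterX _ _ hXY] at hx ⊢
      exact hXconf p.1 x hx
  · -- separation
    intro p q hpq hnep hneq
    beta_reduce
    by_cases h1 : Y p.2 ≤ X p.1 <;> by_cases h2 : Y q.2 ≤ X q.1
    · -- both pieces are Y-clusters
      rw [if_pos h1, if_pos h2, hinterY _ _ h1, hinterY _ _ h2]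
      rcases eq_or_ne p.2 q.2 with hj | hj
      · exfalso
        have hi : p.1 ≠ q.1 := by
          intro hi; exact hpq (Prod.ext hi hj)
        obtain ⟨e, he⟩ := Multiset.exists_mem_of_ne_zero (hinterY _ _ h1 ▸ hnep)
        exact hXdisj p.1 q.1 hi e (Multiset.mem_of_le h1 he)
          (Multiset.mem_of_le h2 (hj ▸ he))
      · exact hYsep p.2 q.2 hj
    · -- p is a Y-cluster, q an X-cluster
      rw [if_pos h1, if_neg h2, hinterY _ _ h1]
      obtain ⟨hXY', hlt'⟩ := hclass q.1 q.2 hneq h2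
      rw [hinterX _ _ hXY']
      obtain ⟨e, he⟩ := Multiset.exists_mem_of_ne_zero (hinterX _ _ hXY' ▸ hneq)
      have hj : p.2 ≠ q.2 := by
        intro hj
        rcases eq_or_ne p.1 q.1 with hi | hi
        · exact h2 (hj ▸ hi ▸ h1)
        · exact hXdisj q.1 p.1 (Ne.symm hi) e he
            (Multiset.mem_of_le h1 (hj ▸ Multiset.mem_of_le hXY' he))
      have hvw : dist (cX q.1) (cY q.2) < r (X q.1).card + r (Y q.2).card := by
        have d1 : dist e (cX q.1) < r (X q.1).card := hXconf q.1 e he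
        have d2 : dist e (cY q.2) < r (Y q.2).card := hYconf q.2 e (Multiset.mem_of_le hXY' he)
        have htri : dist (cX q.1) (cY q.2) ≤ dist (cX q.1) e + dist e (cY q.2) :=
          dist_triangle _ _ _
        rw [dist_comm (cX q.1) e] at htri
        linarith only [d1, d2, htri]
      exact ClusterAux.mixed_sep hrule
        (hcard1 (Multiset.exists_mem_of_ne_zero (hinterY _ _ h1 ▸ hnep)).choose_spec)
        (hcard1 he) hlt' (hYsep p.2 q.2 hj) hvw
    · -- p is an X-cluster, q a Y-cluster
      rw [if_neg h1, if_pos h2, hinterY _ _ h2]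
      obtain ⟨hXY, hlt⟩ := hclass p.1 p.2 hnep h1
      rw [hinterX _ _ hXY]
      obtain ⟨e, he⟩ := Multiset.exists_mem_of_ne_zero (hinterX _ _ hXY ▸ hnep)
      have hj : q.2 ≠ p.2 := by
        intro hj
        rcases eq_or_ne q.1 p.1 with hi | hi
        · exact h1 (hj ▸ hi ▸ h2)
        · exact hXdisj p.1 q.1 (Ne.symm hi) e he
            (Multiset.mem_of_le h2 (hj ▸ Multiset.mem_of_le hXY he))
      have hvw : dist (cX p.1) (cY p.2) < r (X p.1).card + r (Y p.2).card := by
        have d1 : dist e (cX p.1) < r (X p.1).card := hXconf p.1 e he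
        have d2 : dist e (cY p.2) < r (Y p.2).card := hYconf p.2 e (Multiset.mem_of_le hXY he)
        have htri : dist (cX p.1) (cY p.2) ≤ dist (cX p.1) e + dist e (cY p.2) :=
          dist_triangle _ _ _
        rw [dist_comm (cX p.1) e] at htri
        linarith only [d1, d2, htri]
      have hfin := ClusterAux.mixed_sep hrule
        (hcard1 (Multiset.exists_mem_of_ne_zero (hinterY _ _ h2 ▸ hneq)).choose_spec)
        (hcard1 he) hlt (hYsep q.2 p.2 hj) hvw
      rw [dist_comm (cX p.1) (cY q.2), Nat.add_comm ((X p.1).card) ((Y q.2).card)]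
      exact hfin
    · -- both pieces are X-clusters
      rw [if_neg h1, if_neg h2]
      obtain ⟨hXY, _⟩ := hclass p.1 p.2 hnep h1
      obtain ⟨hXY', _⟩ := hclass q.1 q.2 hneq h2
      rw [hinterX _ _ hXY, hinterX _ _ hXY']
      rcases eq_or_ne p.1 q.1 with hi | hi
      · exfalso
        have hj : p.2 ≠ q.2 := by
          intro hj; exact hpq (Prod.ext hi hj)
        obtain ⟨e, he⟩ := Multiset.exists_mem_of_ne_zero (hinterX _ _ hXY ▸ hnep)
        exact hYdisj p.2 q.2 hj e (Multiset.mem_of_le hXY he)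
          (Multiset.mem_of_le hXY' (hi ▸ he))
      · exact hXsep p.1 q.1 hi
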